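/- The map π ↦ α(π), sending a partition to the partition of its angle lengths α_i = π_i + π'_i − 2i + 1, is a bijection between the set of partitions of n all of whose successive ranks lie in {1,2} and the set of partitions of n whose successive parts differ by at least 2 and all of whose parts exceed 1. -/
import Mathlib


/-- The conjugate partition: `conj π i = #{j ≥ 1 : π j ≥ i}`. -/
noncomputable def conj (π : ℕ → ℕ) (i : ℕ) : ℕ := {j : ℕ | 1 ≤ j ∧ i ≤ π j}.ncard

/-- A partition, as a function from part indices (starting at 1) to part sizes:
nonincreasing on indices ≥ 1, eventually zero, with the unused index 0 set to 0. -/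
def IsPartition (π : ℕ → ℕ) : Prop :=
  π 0 = 0 ∧ (∀ i j, 1 ≤ i → i ≤ j → π j ≤ π i) ∧ ∃ N, ∀ j, N ≤ j → π j = 0

/-- The number partitioned, i.e. the sum of all parts. -/
noncomputable def size (π : ℕ → ℕ) : ℕ := ∑' j, π j

/-- The Durfee square size: the largest `d` with `π d ≥ d`. -/
noncomputable def durfee (π : ℕ → ℕ) : ℕ := sSup {d : ℕ | d ≤ π d}

/-- The number of parts. -/
noncomputable def len (π : ℕ → ℕ) : ℕ := conj π 1

/-- The `i`-th successive rank `r_i = π_i - π'_i`. -/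
noncomputable def rank (π : ℕ → ℕ) (i : ℕ) : ℤ := (π i : ℤ) - (conj π i : ℤ)

/-- The `i`-th angle (hook) length `α_i = π_i + π'_i - 2 i + 1`, as an integer. -/
noncomputable def ang (π : ℕ → ℕ) (i : ℕ) : ℤ := (π i : ℤ) + (conj π i : ℤ) - 2 * i + 1

/-- The partition `α(π)` of angle lengths: `α_i = π_i + π'_i - 2 i + 1` for `1 ≤ i ≤ d(π)`,
and `0` outside that range. -/
noncomputable def angPart (π : ℕ → ℕ) (i : ℕ) : ℕ :=
  if 1 ≤ i ∧ i ≤ durfee π then π i + conj π i + 1 - 2 * i else 0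

set_option linter.unusedSectionVars false

theorem downset_eq (s : Finset ℕ) (h0 : 0 ∉ s) (hdc : ∀ k ∈ s, ∀ k', 1 ≤ k' → k' ≤ k → k' ∈ s) :
    s = Finset.Icc 1 s.card := by
  rcases s.eq_empty_or_nonempty with rfl | hne
  · simp
  · have hmax := s.max'_mem hne
    have hs : s = Finset.Icc 1 (s.max' hne) := by
      ext k
      simp only [Finset.mem_Icc]
      constructor
      · intro hk
        exact ⟨Nat.one_le_iff_ne_zero.2 (fun h => h0 (h ▸ hk)), s.le_max' k hk⟩
      · intro ⟨h1, h2⟩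
        exact hdc _ hmax k h1 h2
    have hc : s.card = s.max' hne := by
      conv_lhs => rw [hs]
      rw [Nat.card_Icc]; omega
    rw [hc, ← hs]

section Basics
variable {π : ℕ → ℕ} (hπ : IsPartition π)
include hπ

theorem conj_set_eq (i : ℕ) (hi : 1 ≤ i) :
    {j : ℕ | 1 ≤ j ∧ i ≤ π j} = ↑(Finset.Icc 1 (conj π i)) := by
  obtain ⟨h0, hmono, N, hN⟩ := hπ
  set t : Finset ℕ := (Finset.Icc 1 N).filter (fun j => i ≤ π j) with ht
  have hset : {j : ℕ | 1 ≤ j ∧ i ≤ π j} = ↑t := by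
    ext j
    simp only [ht, Set.mem_setOf_eq, Finset.coe_filter, Finset.mem_Icc]
    constructor
    · rintro ⟨h1, h2⟩
      refine ⟨⟨h1, ?_⟩, h2⟩
      by_contra hc
      have := hN j (by omega)
      omega
    · rintro ⟨⟨h1, _⟩, h2⟩; exact ⟨h1, h2⟩
  have hcard : conj π i = t.card := by
    rw [conj, hset, Set.ncard_coe_finset]
  have := downset_eq t (by simp [ht]) ?_
  · rw [hset, this, ← hcard]
  · intro k hk k' h1 h2
    simp only [ht, Finset.mem_filter, Finset.mem_Icc] at hk ⊢
    exact ⟨⟨h1, le_trans h2 hk.1.2⟩, le_trans hk.2 (hmono k' k h1 h2)⟩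

theorem galois {i j : ℕ} (hi : 1 ≤ i) (hj : 1 ≤ j) : i ≤ π j ↔ j ≤ conj π i := by
  have := conj_set_eq hπ i hi
  have hmem : j ∈ {j : ℕ | 1 ≤ j ∧ i ≤ π j} ↔ j ∈ (↑(Finset.Icc 1 (conj π i)) : Set ℕ) := by
    rw [this]
  simp only [Set.mem_setOf_eq, Finset.coe_Icc, Set.mem_Icc] at hmem
  constructor
  · intro h; exact (hmem.1 ⟨hj, h⟩).2
  · intro h; exact (hmem.2 ⟨hj, h⟩).2

theorem conj_conj {j : ℕ} (hj : 1 ≤ j) : conj (conj π) j = π j := by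
  have : {i : ℕ | 1 ≤ i ∧ j ≤ conj π i} = {i : ℕ | 1 ≤ i ∧ i ≤ π j} := by
    ext i
    simp only [Set.mem_setOf_eq]
    constructor
    · rintro ⟨h1, h2⟩; exact ⟨h1, ((galois hπ h1 hj).2 h2 : i ≤ π j)⟩
    · rintro ⟨h1, h2⟩; exact ⟨h1, (galois hπ h1 hj).1 h2⟩
  rw [conj, this]
  have : {i : ℕ | 1 ≤ i ∧ i ≤ π j} = ↑(Finset.Icc 1 (π j)) := by
    ext i; simp
  rw [this, Set.ncard_coe_finset, Nat.card_Icc]; omega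

theorem conj_anti {i i' : ℕ} (hi : 1 ≤ i) (hii : i ≤ i') : conj π i' ≤ conj π i := by
  have h1 : (1:ℕ) ≤ i' := le_trans hi hii
  by_cases h : conj π i' = 0
  · omega
  · have : 1 ≤ conj π i' := by omega
    have := (galois hπ (j := conj π i') h1 this).2 le_rfl
    exact (galois hπ hi (by omega)).1 (by omega)

theorem conj_le_bound {i N : ℕ} (hi : 1 ≤ i) (hN : ∀ j, N ≤ j → π j = 0) : conj π i ≤ N := by
  by_contra h
  have h1 : 1 ≤ conj π i := by omega
  have := (galois hπ hi (j := conj π i) h1).2 le_rfl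
  rw [hN _ (by omega)] at this
  omega

end Basics
section Durfee
variable {π : ℕ → ℕ} (hπ : IsPartition π)
include hπ

theorem durfee_bddAbove : BddAbove {d : ℕ | d ≤ π d} := by
  obtain ⟨h0, hmono, N, hN⟩ := hπ
  refine ⟨max (π 1) 0, fun k hk => ?_⟩
  simp only [Set.mem_setOf_eq] at hk
  rcases Nat.eq_zero_or_pos k with rfl | hk1
  · simp
  · exact le_trans (le_trans hk (hmono 1 k le_rfl hk1)) (le_max_left _ _)

theorem durfee_le_self : durfee π ≤ π (durfee π) := by
  have : durfee π ∈ {d : ℕ | d ≤ π d} :=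
    Nat.sSup_mem ⟨0, by simp [Set.mem_setOf_eq]⟩ (durfee_bddAbove hπ)
  exact this

theorem lt_of_durfee_lt {k : ℕ} (hk : durfee π < k) : π k < k := by
  by_contra h
  have : k ≤ durfee π := le_csSup (durfee_bddAbove hπ) (by simp only [Set.mem_setOf_eq]; omega)
  omega

theorem durfee_le_part {i : ℕ} (hi : 1 ≤ i) (hid : i ≤ durfee π) : durfee π ≤ π i :=
  le_trans (durfee_le_self hπ) (hπ.2.1 i (durfee π) hi hid)

theorem durfee_le_conj {i : ℕ} (hi : 1 ≤ i) (hid : i ≤ durfee π) : durfee π ≤ conj π i := by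
  have hd1 : 1 ≤ durfee π := le_trans hi hid
  have h1 : i ≤ π (durfee π) := le_trans hid (durfee_le_self hπ)
  exact (galois hπ hi hd1).1 h1

theorem conj_le_durfee {i : ℕ} (hid : durfee π < i) : conj π i ≤ durfee π := by
  by_contra h
  have hi1 : (1:ℕ) ≤ i := by omega
  have h1 : durfee π + 1 ≤ conj π i := by omega
  have := (galois hπ hi1 (j := durfee π + 1) (by omega)).2 h1
  have := lt_of_durfee_lt hπ (k := durfee π + 1) (by omega)
  omega

end Durfee
section Size
variable {π : ℕ → ℕ} (hπ : IsPartition π)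
include hπ

theorem size_eq_sum {N : ℕ} (hN : ∀ j, N ≤ j → π j = 0) :
    size π = ∑ j ∈ Finset.Icc 1 N, π j := by
  rw [size]
  refine tsum_eq_sum ?_
  intro j hj
  simp only [Finset.mem_Icc, not_and_or, not_le] at hj
  rcases hj with h | h
  · interval_cases j
    exact hπ.1
  · exact hN j (by omega)

theorem part_eq_card {j : ℕ} (hj : durfee π < j) :
    π j = ((Finset.Icc 1 (durfee π)).filter (fun i => j ≤ conj π i)).card := by
  have hj1 : 1 ≤ j := by omega
  rw [← conj_conj hπ hj1, conj]
  have : {i : ℕ | 1 ≤ i ∧ j ≤ conj π i}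
      = ↑((Finset.Icc 1 (durfee π)).filter (fun i => j ≤ conj π i)) := by
    ext i
    simp only [Set.mem_setOf_eq, Finset.coe_filter, Finset.mem_Icc]
    constructor
    · rintro ⟨h1, h2⟩
      refine ⟨⟨h1, ?_⟩, h2⟩
      by_contra hc
      have := conj_le_durfee hπ (i := i) (by omega)
      omega
    · rintro ⟨⟨h1, _⟩, h2⟩; exact ⟨h1, h2⟩
  rw [this, Set.ncard_coe_finset]

theorem size_identity :
    size π = ∑ i ∈ Finset.Icc 1 (durfee π), (π i + conj π i - durfee π) := by
  obtain ⟨N₀, hN₀⟩ := hπ.2.2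
  set d := durfee π with hd
  set N := max N₀ (d + 1) with hNdef
  have hN : ∀ j, N ≤ j → π j = 0 := fun j hj => hN₀ j (by omega)
  have hdN : d ≤ N := by omega
  rw [size_eq_sum hπ hN]
  have hIcc : Finset.Icc 1 N = Finset.Ioc 0 N := by ext x; simp [Finset.mem_Icc, Finset.mem_Ioc]; omega
  rw [hIcc, ← Finset.sum_Ioc_consecutive _ (Nat.zero_le d) hdN]
  have h1 : Finset.Ioc 0 d = Finset.Icc 1 d := by ext x; simp [Finset.mem_Icc, Finset.mem_Ioc]; omega
  have h2 : ∑ j ∈ Finset.Ioc d N, π j = ∑ i ∈ Finset.Icc 1 d, (conj π i - d) := by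
    have hstep : ∀ j ∈ Finset.Ioc d N, π j = ∑ i ∈ Finset.Icc 1 d, (if j ≤ conj π i then 1 else 0) := by
      intro j hjm
      simp only [Finset.mem_Ioc] at hjm
      rw [part_eq_card hπ hjm.1, Finset.card_filter]
    rw [Finset.sum_congr rfl hstep, Finset.sum_comm]
    refine Finset.sum_congr rfl ?_
    intro i him
    simp only [Finset.mem_Icc] at him
    have hci : d ≤ conj π i := durfee_le_conj hπ him.1 him.2
    have hciN : conj π i ≤ N := conj_le_bound hπ him.1 hN
    have hsplit : (∑ x ∈ Finset.Ioc d N, if x ≤ conj π i then (1:ℕ) else 0)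
        = ((Finset.Ioc d N).filter (fun j => j ≤ conj π i)).card := by
      rw [Finset.card_filter]
    rw [hsplit]
    have : (Finset.Ioc d N).filter (fun j => j ≤ conj π i) = Finset.Ioc d (conj π i) := by
      ext j; simp only [Finset.mem_filter, Finset.mem_Ioc]; omega
    rw [this]
    simp [Nat.card_Ioc]
  rw [h1, h2, ← Finset.sum_add_distrib]
  refine Finset.sum_congr rfl ?_
  intro i him
  simp only [Finset.mem_Icc] at him
  have hci : d ≤ conj π i := durfee_le_conj hπ him.1 him.2
  omega

end Size
theorem gap_mono {m : ℕ} {f : ℕ → ℕ} (hgap : ∀ i, 1 ≤ i → i + 1 ≤ m → f (i+1) + 2 ≤ f i) :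
    ∀ i j, 1 ≤ i → i ≤ j → j ≤ m → f j ≤ f i := by
  intro i j hi hij hjm
  induction j with
  | zero => omega
  | succ k ih =>
    rcases Nat.eq_or_lt_of_le hij with rfl | hlt
    · exact le_rfl
    · have hk : i ≤ k := by omega
      have := hgap k (by omega) (by omega)
      have := ih hk (by omega)
      omega

theorem sum_sq (d : ℕ) : ∑ i ∈ Finset.Icc 1 d, (2*i - 1) = d * d := by
  induction d with
  | zero => simp
  | succ k ih =>
    rw [Finset.sum_Icc_succ_top (by omega), ih]
    ring_nf
    omega

section Forward
variable {π : ℕ → ℕ} (hπ : IsPartition π)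
include hπ

omit hπ in
theorem rank_nat {i : ℕ} (_hi : 1 ≤ i) (_hid : i ≤ durfee π)
    (hr : rank π i ∈ ({1, 2} : Set ℤ)) : π i = conj π i + 1 ∨ π i = conj π i + 2 := by
  simp only [rank, Set.mem_insert_iff, Set.mem_singleton_iff] at hr
  omega

theorem ang_gap {i : ℕ} (hi : 1 ≤ i) (hid : i + 1 ≤ durfee π) :
    angPart π (i+1) + 2 ≤ angPart π i := by
  have h1 : durfee π ≤ π i := durfee_le_part hπ hi (by omega)
  have h2 : durfee π ≤ conj π i := durfee_le_conj hπ hi (by omega)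
  have h3 : durfee π ≤ π (i+1) := durfee_le_part hπ (by omega) hid
  have h4 : durfee π ≤ conj π (i+1) := durfee_le_conj hπ (by omega) hid
  have h5 : π (i+1) ≤ π i := hπ.2.1 i (i+1) hi (by omega)
  have h6 : conj π (i+1) ≤ conj π i := conj_anti hπ hi (by omega)
  have e1 : angPart π i = π i + conj π i + 1 - 2*i := by
    simp only [angPart]; rw [if_pos (show 1 ≤ i ∧ i ≤ durfee π from ⟨hi, by omega⟩)]
  have e2 : angPart π (i+1) = π (i+1) + conj π (i+1) + 1 - 2*(i+1) := by
    simp only [angPart]; rw [if_pos (show 1 ≤ i+1 ∧ i+1 ≤ durfee π from ⟨by omega, hid⟩)]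
  rw [e1, e2]
  omega

theorem ang_ge_two {i : ℕ} (_hi : 1 ≤ i) (_hid : i ≤ durfee π)
    (hr : rank π i ∈ ({1, 2} : Set ℤ)) : 2 ≤ angPart π i := by
  have h2 : durfee π ≤ conj π i := durfee_le_conj hπ _hi _hid
  have hrn := rank_nat _hi _hid hr
  simp only [angPart]
  rw [if_pos (show 1 ≤ i ∧ i ≤ durfee π from ⟨_hi, _hid⟩)]
  omega

theorem angPart_isPartition : IsPartition (angPart π) := by
  refine ⟨by simp [angPart], ?_, durfee π + 1, ?_⟩
  · intro i j hi hij
    by_cases hj : j ≤ durfee π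
    · exact gap_mono (f := angPart π) (m := durfee π)
        (fun k hk hkd => ang_gap hπ hk hkd) i j hi hij hj
    · simp only [angPart]
      rw [if_neg (by omega)]
      omega
  · intro j hj
    simp only [angPart]
    rw [if_neg (by omega)]

theorem len_angPart (hr : ∀ i, 1 ≤ i → i ≤ durfee π → rank π i ∈ ({1, 2} : Set ℤ)) :
    len (angPart π) = durfee π := by
  rw [len, conj]
  have : {j : ℕ | 1 ≤ j ∧ 1 ≤ angPart π j} = ↑(Finset.Icc 1 (durfee π)) := by
    ext j
    simp only [Set.mem_setOf_eq, Finset.coe_Icc, Set.mem_Icc]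
    constructor
    · rintro ⟨h1, h2⟩
      refine ⟨h1, ?_⟩
      by_contra hc
      simp only [angPart] at h2
      rw [if_neg (by omega)] at h2
      omega
    · rintro ⟨h1, h2⟩
      exact ⟨h1, by have := ang_ge_two hπ h1 h2 (hr j h1 h2); omega⟩
  rw [this, Set.ncard_coe_finset, Nat.card_Icc]
  omega

theorem size_angPart : size (angPart π) = size π := by
  have hzero : ∀ j ∉ Finset.Icc 1 (durfee π), angPart π j = 0 := by
    intro j hj
    simp only [Finset.mem_Icc, not_and_or, not_le] at hj
    simp only [angPart]
    rw [if_neg (by omega)]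
  rw [size, tsum_eq_sum hzero, size_identity hπ]
  have key : ∀ S : Finset ℕ, S = Finset.Icc 1 (durfee π) →
      ∑ j ∈ S, angPart π j + ∑ i ∈ S, (2*i - 1)
      = ∑ i ∈ S, (π i + conj π i - durfee π) + durfee π * durfee π := by
    intro S hS
    subst hS
    rw [← Finset.sum_add_distrib]
    have hdd : durfee π * durfee π = ∑ i ∈ Finset.Icc 1 (durfee π), durfee π := by
      rw [Finset.sum_const, Nat.card_Icc, smul_eq_mul, Nat.add_sub_cancel]
    conv_rhs => rw [hdd]
    rw [← Finset.sum_add_distrib]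
    refine Finset.sum_congr rfl ?_
    intro i him
    simp only [Finset.mem_Icc] at him
    have h1 : durfee π ≤ π i := durfee_le_part hπ him.1 him.2
    have h2 : durfee π ≤ conj π i := durfee_le_conj hπ him.1 him.2
    simp only [angPart]
    rw [if_pos (show 1 ≤ i ∧ i ≤ durfee π from ⟨him.1, him.2⟩)]
    have h3 : 1 ≤ i := him.1
    have h4 : i ≤ durfee π := him.2
    omega
  have := key _ rfl
  have hsq := sum_sq (durfee π)
  omega

end Forward
theorem mono_consec {m : ℕ} {f : ℕ → ℕ} (h : ∀ i, 1 ≤ i → i + 1 ≤ m → f (i+1) ≤ f i) :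
    ∀ i j, 1 ≤ i → i ≤ j → j ≤ m → f j ≤ f i := by
  intro i j hi hij hjm
  induction j with
  | zero => omega
  | succ k ih =>
    rcases Nat.eq_or_lt_of_le hij with rfl | hlt
    · exact le_rfl
    · exact le_trans (h k (by omega) (by omega)) (ih (by omega) (by omega))

noncomputable def rk (α : ℕ → ℕ) (i : ℕ) : ℕ := if α i % 2 = 0 then 1 else 2
noncomputable def aa (α : ℕ → ℕ) (i : ℕ) : ℕ := (α i + 2*i - 1 + rk α i)/2
noncomputable def bb (α : ℕ → ℕ) (i : ℕ) : ℕ := (α i + 2*i - 1 - rk α i)/2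
noncomputable def invp (α : ℕ → ℕ) (j : ℕ) : ℕ :=
  if j = 0 then 0 else if j ≤ len α then aa α j
  else ((Finset.Icc 1 (len α)).filter (fun i => j ≤ bb α i)).card

theorem invp_eq_a {α : ℕ → ℕ} {j : ℕ} (h1 : 1 ≤ j) (h2 : j ≤ len α) : invp α j = aa α j := by
  rw [invp, if_neg (by omega), if_pos h2]

theorem invp_eq_c {α : ℕ → ℕ} {j : ℕ} (h : len α < j) :
    invp α j = ((Finset.Icc 1 (len α)).filter (fun i => j ≤ bb α i)).card := by
  rw [invp, if_neg (by omega), if_neg (by omega)]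

theorem ab_facts {α : ℕ → ℕ} {i : ℕ} (h2 : 2 ≤ α i) (hi : 1 ≤ i) :
    aa α i + bb α i = α i + 2*i - 1 ∧ aa α i = bb α i + rk α i ∧ i ≤ bb α i
      ∧ 1 ≤ rk α i ∧ rk α i ≤ 2 := by
  by_cases h : α i % 2 = 0 <;> simp [aa, bb, rk, h] <;> omega

theorem ab_anti {α : ℕ → ℕ} {i : ℕ} (h2 : 2 ≤ α (i+1)) (hi : 1 ≤ i)
    (hgapi : α (i+1) + 2 ≤ α i) :
    aa α (i+1) ≤ aa α i ∧ bb α (i+1) ≤ bb α i := by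
  by_cases h : α i % 2 = 0 <;> by_cases h' : α (i+1) % 2 = 0 <;>
    simp [aa, bb, rk, h, h'] <;> omega

section Backward
variable {α : ℕ → ℕ} (hα : IsPartition α)
  (hgap : ∀ i, 1 ≤ i → i + 1 ≤ len α → α (i + 1) + 2 ≤ α i)
  (htwo : ∀ i, 1 ≤ i → i ≤ len α → 2 ≤ α i)
include hα hgap htwo

theorem alpha_zero {j : ℕ} (hj : len α < j) : α j = 0 := by
  by_contra h
  have hj1 : (1:ℕ) ≤ j := by omega
  have := (galois hα (i := 1) le_rfl hj1).1 (by omega)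
  rw [len] at hj
  omega

theorem bb_ge_d {i : ℕ} (hi : 1 ≤ i) (hid : i ≤ len α) : len α ≤ bb α i := by
  have hanti : ∀ i j, 1 ≤ i → i ≤ j → j ≤ len α → bb α j ≤ bb α i := by
    refine mono_consec ?_
    intro k hk hkd
    exact (ab_anti (htwo _ (by omega) hkd) hk (hgap k hk hkd)).2
  have hd : len α ≤ bb α (len α) := (ab_facts (htwo _ (by omega) le_rfl) (by omega)).2.2.1
  exact le_trans hd (hanti i (len α) hi hid le_rfl)

theorem aa_ge_bb {i : ℕ} (hi : 1 ≤ i) (hid : i ≤ len α) : bb α i ≤ aa α i := by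
  have := ab_facts (htwo _ hi hid) hi
  omega

theorem aa_anti : ∀ i j, 1 ≤ i → i ≤ j → j ≤ len α → aa α j ≤ aa α i := by
  refine mono_consec ?_
  intro k hk hkd
  exact (ab_anti (htwo _ (by omega) hkd) hk (hgap k hk hkd)).1

theorem bb_anti : ∀ i j, 1 ≤ i → i ≤ j → j ≤ len α → bb α j ≤ bb α i := by
  refine mono_consec ?_
  intro k hk hkd
  exact (ab_anti (htwo _ (by omega) hkd) hk (hgap k hk hkd)).2

theorem invp_val_le {j : ℕ} (hj : len α < j) : invp α j ≤ len α := by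
  rw [invp_eq_c hj]
  exact le_trans (Finset.card_filter_le _ _) (by rw [Nat.card_Icc]; omega)

theorem invp_isPartition : IsPartition (invp α) := by
  refine ⟨by simp [invp], ?_, ?_⟩
  · intro i j hi hij
    by_cases hjd : j ≤ len α
    · rw [invp_eq_a hi (by omega), invp_eq_a (by omega : (1:ℕ) ≤ j) hjd]
      exact aa_anti hα hgap htwo i j hi hij hjd
    · by_cases hid : i ≤ len α
      · have h1 : invp α j ≤ len α := invp_val_le hα hgap htwo (by omega)
        have h2 : len α ≤ bb α i := bb_ge_d hα hgap htwo hi hid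
        have h3 : bb α i ≤ aa α i := aa_ge_bb hα hgap htwo hi hid
        rw [invp_eq_a hi hid]
        omega
      · rw [invp_eq_c (by omega), invp_eq_c (by omega)]
        refine Finset.card_le_card ?_
        intro k hk
        simp only [Finset.mem_filter, Finset.mem_Icc] at hk ⊢
        exact ⟨hk.1, by omega⟩
  · refine ⟨len α + bb α 1 + 1, ?_⟩
    intro j hj
    rcases Nat.eq_zero_or_pos (len α) with hd0 | hd1
    · rw [invp_eq_c (by omega), hd0]
      simp
    · rw [invp_eq_c (by omega)]
      rw [Finset.card_eq_zero, Finset.filter_eq_empty_iff]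
      intro k hk
      simp only [Finset.mem_Icc] at hk
      have := bb_anti hα hgap htwo 1 k le_rfl hk.1 hk.2
      omega

theorem conj_invp' {i : ℕ} (hi : 1 ≤ i) (hid : i ≤ len α) : conj (invp α) i = bb α i := by
  have hbd : len α ≤ bb α i := bb_ge_d hα hgap htwo hi hid
  have key : ∀ j, len α < j → (i ≤ invp α j ↔ j ≤ bb α i) := by
    intro j hj
    rw [invp_eq_c (by omega)]
    constructor
    · intro hcard
      have hds := downset_eq ((Finset.Icc 1 (len α)).filter (fun k => j ≤ bb α k))
        (by simp) ?_
      · have : i ∈ (Finset.Icc 1 (len α)).filter (fun k => j ≤ bb α k) := by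
          rw [hds, Finset.mem_Icc]; omega
        simp only [Finset.mem_filter] at this
        exact this.2
      · intro k hk k' h1 h2
        simp only [Finset.mem_filter, Finset.mem_Icc] at hk ⊢
        have := bb_anti hα hgap htwo k' k h1 h2 hk.1.2
        exact ⟨⟨h1, by omega⟩, by omega⟩
    · intro hjb
      have hsub : Finset.Icc 1 i ⊆ (Finset.Icc 1 (len α)).filter (fun k => j ≤ bb α k) := by
        intro k hk
        simp only [Finset.mem_Icc] at hk
        simp only [Finset.mem_filter, Finset.mem_Icc]
        have := bb_anti hα hgap htwo k i hk.1 hk.2 hid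
        exact ⟨⟨hk.1, by omega⟩, by omega⟩
      have := Finset.card_le_card hsub
      rw [Nat.card_Icc] at this
      omega
  have hset : {j : ℕ | 1 ≤ j ∧ i ≤ invp α j} = ↑(Finset.Icc 1 (bb α i)) := by
    ext j
    simp only [Set.mem_setOf_eq, Finset.coe_Icc, Set.mem_Icc]
    constructor
    · rintro ⟨h1, h2⟩
      refine ⟨h1, ?_⟩
      by_cases hjd : j ≤ len α
      · omega
      · exact (key j (by omega)).1 h2
    · rintro ⟨h1, h2⟩
      refine ⟨h1, ?_⟩
      by_cases hjd : j ≤ len α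
      · rw [invp_eq_a h1 hjd]
        have h3 : bb α j ≤ aa α j := aa_ge_bb hα hgap htwo h1 hjd
        have h4 : len α ≤ bb α j := bb_ge_d hα hgap htwo h1 hjd
        omega
      · exact (key j (by omega)).2 h2
  rw [conj, hset, Set.ncard_coe_finset, Nat.card_Icc]
  omega

theorem durfee_invp : durfee (invp α) = len α := by
  have h1 : ∀ k, len α < k → invp α k < k := by
    intro k hk
    have := invp_val_le hα hgap htwo hk
    omega
  have h2 : len α ≤ invp α (len α) := by
    rcases Nat.eq_zero_or_pos (len α) with hd0 | hd1
    · rw [hd0]; omega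
    · rw [invp_eq_a hd1 le_rfl]
      have h3 := aa_ge_bb hα hgap htwo hd1 le_rfl
      have h4 := bb_ge_d hα hgap htwo hd1 le_rfl
      omega
  rw [durfee]
  apply le_antisymm
  · apply csSup_le ⟨0, by simp⟩
    intro k hk
    simp only [Set.mem_setOf_eq] at hk
    by_contra hc
    have := h1 k (by omega)
    omega
  · refine le_csSup ⟨len α, ?_⟩ h2
    intro k hk
    simp only [Set.mem_setOf_eq] at hk
    by_contra hc
    have := h1 k (by omega)
    omega

end Backward
section Backward2
variable {α : ℕ → ℕ} (hα : IsPartition α)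
  (hgap : ∀ i, 1 ≤ i → i + 1 ≤ len α → α (i + 1) + 2 ≤ α i)
  (htwo : ∀ i, 1 ≤ i → i ≤ len α → 2 ≤ α i)
include hα hgap htwo

theorem rank_invp {i : ℕ} (hi : 1 ≤ i) (hid : i ≤ len α) :
    rank (invp α) i ∈ ({1, 2} : Set ℤ) := by
  have hf := ab_facts (htwo _ hi hid) hi
  simp only [rank, invp_eq_a hi hid, conj_invp' hα hgap htwo hi hid,
    Set.mem_insert_iff, Set.mem_singleton_iff]
  omega

theorem size_invp : size (invp α) = size α := by
  have hP := invp_isPartition hα hgap htwo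
  rw [size_identity hP, durfee_invp hα hgap htwo]
  set d := len α with hd
  have hzero : ∀ j ∉ Finset.Icc 1 d, α j = 0 := by
    intro j hj
    simp only [Finset.mem_Icc, not_and_or, not_le] at hj
    rcases hj with h | h
    · interval_cases j
      exact hα.1
    · exact alpha_zero hα hgap htwo h
  have hsα : size α = ∑ j ∈ Finset.Icc 1 d, α j := by
    rw [size]; exact tsum_eq_sum hzero
  rw [hsα]
  have key : ∑ i ∈ Finset.Icc 1 d, (invp α i + conj (invp α) i - d) + ∑ _i ∈ Finset.Icc 1 d, d
      = ∑ j ∈ Finset.Icc 1 d, α j + ∑ i ∈ Finset.Icc 1 d, (2*i - 1) := by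
    rw [← Finset.sum_add_distrib, ← Finset.sum_add_distrib]
    refine Finset.sum_congr rfl ?_
    intro i him
    simp only [Finset.mem_Icc] at him
    have hf := ab_facts (htwo _ him.1 him.2) him.1
    have hbd : d ≤ bb α i := bb_ge_d hα hgap htwo him.1 him.2
    rw [invp_eq_a him.1 him.2, conj_invp' hα hgap htwo him.1 him.2]
    omega
  have h1 : ∑ _i ∈ Finset.Icc 1 d, d = d * d := by
    rw [Finset.sum_const, Nat.card_Icc, smul_eq_mul, Nat.add_sub_cancel]
  have h2 := sum_sq d
  omega

theorem angPart_invp : angPart (invp α) = α := by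
  funext j
  rw [angPart, durfee_invp hα hgap htwo]
  by_cases hj : 1 ≤ j ∧ j ≤ len α
  · rw [if_pos hj, invp_eq_a hj.1 hj.2, conj_invp' hα hgap htwo hj.1 hj.2]
    have hf := ab_facts (htwo _ hj.1 hj.2) hj.1
    omega
  · rw [if_neg hj]
    rcases Nat.eq_zero_or_pos j with rfl | hj1
    · exact (hα.1).symm
    · exact (alpha_zero hα hgap htwo (by omega)).symm

end Backward2

theorem stmt6 (n : ℕ) :
    Set.BijOn angPart
      {π | IsPartition π ∧ size π = n ∧
        ∀ i, 1 ≤ i → i ≤ durfee π → rank π i ∈ ({1, 2} : Set ℤ)}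
      {α | IsPartition α ∧ size α = n ∧
        (∀ i, 1 ≤ i → i + 1 ≤ len α → α (i + 1) + 2 ≤ α i) ∧ (∀ i, 1 ≤ i → i ≤ len α → 2 ≤ α i)} := by
  refine ⟨?_, ?_, ?_⟩
  · rintro π ⟨hπ, hsize, hrank⟩
    refine ⟨angPart_isPartition hπ, by rw [size_angPart hπ]; exact hsize, ?_, ?_⟩
    · intro i hi hile
      rw [len_angPart hπ hrank] at hile
      exact ang_gap hπ hi hile
    · intro i hi hile
      rw [len_angPart hπ hrank] at hile
      exact ang_ge_two hπ hi hile (hrank i hi hile)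
  · rintro π ⟨hπ, hsπ, hrπ⟩ σ ⟨hσ, hsσ, hrσ⟩ heq
    have hd : durfee π = durfee σ := by
      rw [← len_angPart hπ hrπ, ← len_angPart hσ hrσ, heq]
    have hkey : ∀ i, 1 ≤ i → i ≤ durfee π → π i = σ i ∧ conj π i = conj σ i := by
      intro i hi hid
      have hid' : i ≤ durfee σ := hd ▸ hid
      have h1 := congrFun heq i
      have e1 : angPart π i = π i + conj π i + 1 - 2*i := by
        rw [angPart, if_pos (show 1 ≤ i ∧ i ≤ durfee π from ⟨hi, hid⟩)]
      have e2 : angPart σ i = σ i + conj σ i + 1 - 2*i := by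
        rw [angPart, if_pos (show 1 ≤ i ∧ i ≤ durfee σ from ⟨hi, hid'⟩)]
      have b1 : durfee π ≤ π i := durfee_le_part hπ hi hid
      have b2 : durfee π ≤ conj π i := durfee_le_conj hπ hi hid
      have b3 : durfee σ ≤ σ i := durfee_le_part hσ hi hid'
      have b4 : durfee σ ≤ conj σ i := durfee_le_conj hσ hi hid'
      have r1 := rank_nat hi hid (hrπ i hi hid)
      have r2 := rank_nat hi hid' (hrσ i hi hid')
      omega
    funext j
    rcases Nat.eq_zero_or_pos j with rfl | hj1
    · rw [hπ.1, hσ.1]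
    · by_cases hjd : j ≤ durfee π
      · exact (hkey j hj1 hjd).1
      · rw [part_eq_card hπ (by omega), part_eq_card hσ (by rw [← hd]; omega), ← hd]
        refine congrArg Finset.card (Finset.filter_congr ?_)
        intro k hk
        simp only [Finset.mem_Icc] at hk
        rw [(hkey k hk.1 hk.2).2]
  · rintro α ⟨hα, hsize, hgap, htwo⟩
    refine ⟨invp α, ⟨invp_isPartition hα hgap htwo,
      by rw [size_invp hα hgap htwo]; exact hsize, ?_⟩, angPart_invp hα hgap htwo⟩
    intro i hi hid
    rw [durfee_invp hα hgap htwo] at hid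
    exact rank_invp hα hgap htwo hi hid
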